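/- Let ζ : ℝ⁺ → ℝ be C¹ with 0 < ζ'(μ) ≤ 1 and ζ'(μ) ≤ J/(2√μ) for all μ > 0 (constants J > 0). Then the electrostatic potential φ(r) := q₀ ∫_r^∞ ζ'(q₀²/(2s⁴)) s^{−2} ds is finite for all r ≥ 0 (including r = 0), monotone decreasing in r when q₀ > 0, and satisfies sgn(q₀)·φ(r) ≤ |q₀|/r for all r > 0. -/

import Mathlib

open Set Filter MeasureTheory

theorem stmt_10 (ζ : ℝ → ℝ) (q₀ J : ℝ) (hq : q₀ ≠ 0) (hJ : 0 < J)
    (hC1 : ContDiffOn ℝ 1 ζ (Ioi 0))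
    (hd : ∀ μ > 0, 0 < deriv ζ μ ∧ deriv ζ μ ≤ 1 ∧ deriv ζ μ ≤ J / (2 * Real.sqrt μ)) :
    (∀ r ≥ 0, IntegrableOn (fun s => deriv ζ (q₀^2 / (2 * s^4)) / s^2) (Ioi r)) ∧
    (0 < q₀ → AntitoneOn (fun r => q₀ * ∫ s in Ioi r, deriv ζ (q₀^2 / (2 * s^4)) / s^2) (Ici 0)) ∧
    (∀ r > 0, Real.sign q₀ * (q₀ * ∫ s in Ioi r, deriv ζ (q₀^2 / (2 * s^4)) / s^2)
      ≤ |q₀| / r) := by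
  set f : ℝ → ℝ := fun s => deriv ζ (q₀^2 / (2 * s^4)) / s^2 with hf
  have hq2 : 0 < q₀ ^ 2 := by positivity
  have hμpos : ∀ s : ℝ, 0 < s → 0 < q₀ ^ 2 / (2 * s ^ 4) := fun s hs => by positivity
  -- continuity of f on Ioi 0
  have hder : ContinuousOn (deriv ζ) (Ioi 0) :=
    hC1.continuousOn_deriv_of_isOpen isOpen_Ioi le_rfl
  have hcf : ContinuousOn f (Ioi 0) := by
    apply ContinuousOn.div
    · apply hder.comp
      · exact (continuousOn_const.div (by fun_prop) fun s hs => by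
          have : (0:ℝ) < s := hs; positivity)
      · exact fun s hs => hμpos s hs
    · fun_prop
    · intro s hs
      have : (0:ℝ) < s := hs
      positivity
  have hfpos : ∀ s : ℝ, 0 < s → 0 < f s := by
    intro s hs
    exact div_pos (hd _ (hμpos s hs)).1 (by positivity)
  have hfle : ∀ s : ℝ, 0 < s → f s ≤ s ^ (-2 : ℝ) := by
    intro s hs
    rw [Real.rpow_neg hs.le, show (2:ℝ) = ((2:ℕ):ℝ) by norm_num, Real.rpow_natCast]
    have h1 := (hd _ (hμpos s hs)).2.1
    rw [hf]
    rw [div_le_iff₀ (by positivity), inv_mul_cancel₀ (by positivity)]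
    exact h1
  have hfleC : ∀ s : ℝ, 0 < s → f s ≤ J * Real.sqrt 2 / (2 * |q₀|) := by
    intro s hs
    have hμ := hμpos s hs
    have h2 := (hd _ hμ).2.2
    have hsqrt : Real.sqrt (q₀ ^ 2 / (2 * s ^ 4)) = |q₀| / (Real.sqrt 2 * s ^ 2) := by
      rw [Real.sqrt_div' _ (by positivity), Real.sqrt_sq_eq_abs]
      congr 1
      rw [show (2 : ℝ) * s ^ 4 = (Real.sqrt 2 * s ^ 2) ^ 2 by
        rw [mul_pow, Real.sq_sqrt (by norm_num)]; ring]
      exact Real.sqrt_sq (by positivity)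
    rw [hsqrt] at h2
    have hs2 : Real.sqrt 2 > 0 := by positivity
    have habs : 0 < |q₀| := abs_pos.mpr hq
    calc f s = deriv ζ (q₀ ^ 2 / (2 * s ^ 4)) / s ^ 2 := rfl
      _ ≤ (J / (2 * (|q₀| / (Real.sqrt 2 * s ^ 2)))) / s ^ 2 := by
          apply div_le_div_of_nonneg_right h2 (by positivity)
      _ = J * Real.sqrt 2 / (2 * |q₀|) := by
          field_simp
  have hmeas : ∀ r : ℝ, 0 ≤ r → AEStronglyMeasurable f (volume.restrict (Ioi r)) := by
    intro r hr
    exact (hcf.mono (Ioi_subset_Ioi hr)).aestronglyMeasurable measurableSet_Ioi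
  -- integrability
  have hint : ∀ r ≥ (0:ℝ), IntegrableOn f (Ioi r) := by
    have h01 : IntegrableOn f (Ioc 0 1) := by
      apply Integrable.mono' (g := fun _ => J * Real.sqrt 2 / (2 * |q₀|))
        ((integrableOn_const_iff (by simp)).mpr (Or.inr measure_Ioc_lt_top))
      · exact (hcf.mono Ioc_subset_Ioi_self).aestronglyMeasurable measurableSet_Ioc
      · filter_upwards [ae_restrict_mem measurableSet_Ioc] with s hs
        rw [Real.norm_eq_abs, abs_of_pos (hfpos s hs.1)]
        exact hfleC s hs.1
    have h1i : IntegrableOn f (Ioi 1) := by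
      apply Integrable.mono' (g := fun s : ℝ => s ^ (-2:ℝ))
        (integrableOn_Ioi_rpow_of_lt (by norm_num) one_pos)
      · exact hmeas 1 zero_le_one
      · filter_upwards [ae_restrict_mem measurableSet_Ioi] with s hs
        rw [Real.norm_eq_abs, abs_of_pos (hfpos s (lt_trans one_pos hs))]
        exact hfle s (lt_trans one_pos hs)
    have h0 : IntegrableOn f (Ioi 0) := by
      have : Ioi (0:ℝ) = Ioc 0 1 ∪ Ioi 1 := (Ioc_union_Ioi_eq_Ioi zero_le_one).symm
      rw [this]
      exact h01.union h1i
    intro r hr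
    exact h0.mono_set (Ioi_subset_Ioi hr)
  refine ⟨hint, ?_, ?_⟩
  · intro hq0 a ha b hb hab
    dsimp only
    apply mul_le_mul_of_nonneg_left _ hq0.le
    apply setIntegral_mono_set (hint a ha)
    · filter_upwards [ae_restrict_mem measurableSet_Ioi] with s hs
      exact (hfpos s (lt_of_le_of_lt ha hs)).le
    · exact HasSubset.Subset.eventuallyLE (Ioi_subset_Ioi hab)
  · intro r hr
    have hsgn : Real.sign q₀ * q₀ = |q₀| := by
      rcases hq.lt_or_gt with h | h
      · rw [Real.sign_of_neg h, abs_of_neg h]; ring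
      · rw [Real.sign_of_pos h, abs_of_pos h]; ring
    rw [← mul_assoc, hsgn, div_eq_mul_inv]
    apply mul_le_mul_of_nonneg_left _ (abs_nonneg q₀)
    calc (∫ s in Ioi r, f s) ≤ ∫ s in Ioi r, s ^ (-2:ℝ) := by
          apply setIntegral_mono_on (hint r hr.le)
            (integrableOn_Ioi_rpow_of_lt (by norm_num) hr) measurableSet_Ioi
          intro s hs
          exact hfle s (lt_trans hr hs)
      _ = r⁻¹ := by
          rw [integral_Ioi_rpow_of_lt (by norm_num) hr]
          norm_num
          rw [Real.rpow_neg_one]
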